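/- For PSD matrices A, B ∈ ℝ^{M×M}, the nuclear norm of their difference dominates the squared Frobenius norm of the difference of their square roots: ‖A − B‖_* ≥ ‖A^{1/2} − B^{1/2}‖_F². -/

import Mathlib

open Matrix

lemma real_conjTranspose_eq {m n : ℕ} (A : Matrix (Fin m) (Fin n) ℝ) : Aᴴ = Aᵀ := rfl

lemma psd_tmul {m n : ℕ} (A : Matrix (Fin m) (Fin n) ℝ) : (Aᵀ * A).PosSemidef := by
  have h := Matrix.posSemidef_conjTranspose_mul_self A
  rwa [real_conjTranspose_eq] at h

lemma psd_gram {m n : ℕ} (A : Matrix (Fin m) (Fin n) ℝ) : (A * Aᵀ).PosSemidef := by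
  have h := Matrix.posSemidef_self_mul_conjTranspose A
  rwa [real_conjTranspose_eq] at h

namespace Matrix.PosSemidef

open scoped ComplexOrder

variable {n 𝕜 : Type*} [Fintype n] [RCLike 𝕜] [DecidableEq n] {A : Matrix n n 𝕜}

/-- The positive semidefinite square root of a positive semidefinite matrix -/
noncomputable def sqrt (hA : PosSemidef A) : Matrix n n 𝕜 :=
  hA.1.eigenvectorUnitary.1 * diagonal ((↑) ∘ (√·) ∘ hA.1.eigenvalues) *
  (star hA.1.eigenvectorUnitary : Matrix n n 𝕜)

lemma posSemidef_sqrt (hA : PosSemidef A) : PosSemidef hA.sqrt := by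
  apply PosSemidef.mul_mul_conjTranspose_same
  refine posSemidef_diagonal_iff.mpr fun i ↦ ?_
  rw [Function.comp_apply, RCLike.nonneg_iff]
  constructor
  · simp only [RCLike.ofReal_re]
    exact Real.sqrt_nonneg _
  · simp only [RCLike.ofReal_im]

end Matrix.PosSemidef

lemma psd_sand {M : ℕ} {Kx Ky : Matrix (Fin M) (Fin M) ℝ} (hx : Kx.PosSemidef) (hy : Ky.PosSemidef) :
    (hx.sqrt * Ky * hx.sqrt).PosSemidef := by
  have h := hy.mul_mul_conjTranspose_same hx.sqrt
  rwa [hx.posSemidef_sqrt.isHermitian.eq] at h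

/-- Nuclear norm: sum of singular values, i.e. `Tr[(AᵀA)^{1/2}]`. -/
noncomputable def nuclearNorm {m n : ℕ} (A : Matrix (Fin m) (Fin n) ℝ) : ℝ :=
  (Matrix.PosSemidef.sqrt (psd_tmul A)).trace

/-- Frobenius norm. -/
noncomputable def frobNorm {m n : ℕ} (A : Matrix (Fin m) (Fin n) ℝ) : ℝ :=
  Real.sqrt (Matrix.trace (Aᵀ * A))

/-- Fidelity `Tr[(Kx^{1/2} Ky Kx^{1/2})^{1/2}]` between PSD matrices. -/
noncomputable def fidelity {M : ℕ} {Kx Ky : Matrix (Fin M) (Fin M) ℝ}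
    (hx : Kx.PosSemidef) (hy : Ky.PosSemidef) : ℝ :=
  (Matrix.PosSemidef.sqrt (psd_sand hx hy)).trace

namespace Matrix.PosSemidef

open scoped MatrixOrder

variable {n : Type*} [Fintype n] [DecidableEq n]

lemma sqrt_eq_cfc_sqrt {A : Matrix n n ℝ} (hA : A.PosSemidef) : hA.sqrt = CFC.sqrt A := by
  have hA0 : (0 : Matrix n n ℝ) ≤ A := Matrix.nonneg_iff_posSemidef.mpr hA
  rw [CFC.sqrt_eq_cfc, cfc_nnreal_eq_real _ A, hA.1.cfc_eq, IsHermitian.cfc,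
    Unitary.conjStarAlgAut_apply, PosSemidef.sqrt]
  congr 3
  ext i
  simp [Real.coe_sqrt, Real.coe_toNNReal', hA.eigenvalues_nonneg]

lemma sqrt_mul_self {A : Matrix n n ℝ} (hA : A.PosSemidef) : hA.sqrt * hA.sqrt = A := by
  rw [sqrt_eq_cfc_sqrt]
  exact CFC.sqrt_mul_sqrt_self A (Matrix.nonneg_iff_posSemidef.mpr hA)

lemma eq_sqrt_of_sq_eq {A B : Matrix n n ℝ} (hA : A.PosSemidef) (hB : B.PosSemidef)
    (h : A ^ 2 = B) : A = hB.sqrt := by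
  rw [sqrt_eq_cfc_sqrt, eq_comm, CFC.sqrt_eq_iff B A (Matrix.nonneg_iff_posSemidef.mpr hB)
    (Matrix.nonneg_iff_posSemidef.mpr hA), ← sq, h]

end Matrix.PosSemidef

namespace PS

variable {n : Type*} [Fintype n] [DecidableEq n] {A : Matrix n n ℝ}

lemma cfc_mul (hA : A.IsHermitian) (f g : ℝ → ℝ) :
    hA.cfc f * hA.cfc g = hA.cfc (fun x => f x * g x) := by
  have key {a b c d e f : Matrix n n ℝ} : (a * b * c) * (d * e * f) = a * (b * (c * d) * e) * f := by
    simp only [mul_assoc]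
  simp only [Matrix.IsHermitian.cfc, Unitary.conjStarAlgAut_apply, key, SetLike.coe_mem, Unitary.star_mul_self_of_mem, mul_one,
    diagonal_mul_diagonal]
  congr!

lemma cfc_trace (hA : A.IsHermitian) (f : ℝ → ℝ) :
    (hA.cfc f).trace = ∑ i, f (hA.eigenvalues i) := by
  rw [Matrix.IsHermitian.cfc, Unitary.conjStarAlgAut_apply, trace_mul_comm, ← mul_assoc, Unitary.coe_star_mul_self,
    one_mul, trace_diagonal]
  simp

lemma cfc_id (hA : A.IsHermitian) : hA.cfc id = A := by
  rw [Matrix.IsHermitian.cfc]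
  conv_rhs => rw [hA.spectral_theorem]
  congr!

lemma cfc_one (hA : A.IsHermitian) : hA.cfc (fun _ => 1) = 1 := by
  rw [Matrix.IsHermitian.cfc]
  have : diagonal (RCLike.ofReal ∘ (fun _ : ℝ => (1:ℝ)) ∘ hA.eigenvalues) = (1 : Matrix n n ℝ) := by
    simp [Function.comp_def, Pi.one_def]
  rw [Unitary.conjStarAlgAut_apply, this, mul_one, Unitary.mul_star_self_of_mem (SetLike.coe_mem _)]

lemma cfc_sub (hA : A.IsHermitian) (f g : ℝ → ℝ) :
    hA.cfc f - hA.cfc g = hA.cfc (fun x => f x - g x) := by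
  simp only [Matrix.IsHermitian.cfc, Unitary.conjStarAlgAut_apply, ← sub_mul, ← mul_sub, ← diagonal_sub]
  congr! with i
  simp

lemma cfc_add (hA : A.IsHermitian) (f g : ℝ → ℝ) :
    hA.cfc f + hA.cfc g = hA.cfc (fun x => f x + g x) := by
  simp only [Matrix.IsHermitian.cfc, Unitary.conjStarAlgAut_apply, ← add_mul, ← mul_add, ← diagonal_add]
  congr! with i
  simp

lemma cfc_psd (hA : A.IsHermitian) (f : ℝ → ℝ) (hf : ∀ x, 0 ≤ f x) :
    (hA.cfc f).PosSemidef := by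
  rw [Matrix.IsHermitian.cfc]
  refine (posSemidef_diagonal_iff.mpr ?_).mul_mul_conjTranspose_same _
  intro i
  simpa using hf _

lemma psd_trace_nonneg {P : Matrix n n ℝ} (hP : P.PosSemidef) : 0 ≤ P.trace := by
  rw [Matrix.trace]
  refine Finset.sum_nonneg fun i _ => ?_
  exact hP.diag_nonneg

lemma trace_mul_psd_nonneg {P Q : Matrix n n ℝ} (hP : P.PosSemidef) (hQ : Q.PosSemidef) :
    0 ≤ (P * Q).trace := by
  rw [← hP.sqrt_mul_self, mul_assoc, trace_mul_comm]
  have h := hQ.mul_mul_conjTranspose_same hP.sqrt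
  rw [hP.posSemidef_sqrt.isHermitian.eq] at h
  simpa [mul_assoc] using psd_trace_nonneg h

noncomputable def sgn (x : ℝ) : ℝ := if 0 ≤ x then 1 else -1

lemma cfc_congr (hA : A.IsHermitian) {f g : ℝ → ℝ} (h : ∀ x, f x = g x) :
    hA.cfc f = hA.cfc g := by
  rw [show f = g from funext h]

lemma sgn_mul (x : ℝ) : sgn x * x = |x| := by
  rcases le_or_gt 0 x with h | h
  · rw [sgn, if_pos h, one_mul, abs_of_nonneg h]
  · rw [sgn, if_neg (not_le.mpr h), neg_one_mul, abs_of_neg h]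

lemma one_sub_sgn (x : ℝ) : 0 ≤ 1 - sgn x := by
  rcases le_or_gt 0 x with h | h
  · rw [sgn, if_pos h]; norm_num
  · rw [sgn, if_neg (not_le.mpr h)]; norm_num

lemma one_add_sgn (x : ℝ) : 0 ≤ 1 + sgn x := by
  rcases le_or_gt 0 x with h | h
  · rw [sgn, if_pos h]; norm_num
  · rw [sgn, if_neg (not_le.mpr h)]; norm_num

lemma pos_sub_neg (x : ℝ) : max x 0 - max (-x) 0 = x := by
  rcases le_or_gt 0 x with h | h
  · rw [max_eq_left h, max_eq_right (neg_nonpos_of_nonneg h), sub_zero]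
  · rw [max_eq_right h.le, max_eq_left (neg_nonneg.mpr h.le), zero_sub, neg_neg]

lemma pos_add_neg (x : ℝ) : max x 0 + max (-x) 0 = |x| := by
  rcases le_or_gt 0 x with h | h
  · rw [max_eq_left h, max_eq_right (neg_nonpos_of_nonneg h), add_zero, abs_of_nonneg h]
  · rw [max_eq_right h.le, max_eq_left (neg_nonneg.mpr h.le), zero_add, abs_of_neg h]

lemma main {A B : Matrix n n ℝ} (hA : A.PosSemidef) (hB : B.PosSemidef) :
    ((hA.sqrt - hB.sqrt) * (hA.sqrt - hB.sqrt)).trace ≤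
      ((hA.isHermitian.sub hB.isHermitian).cfc (fun x => |x|)).trace := by
  set X := hA.sqrt - hB.sqrt with hXdef
  set Y := hA.sqrt + hB.sqrt with hYdef
  have hX : X.IsHermitian := hA.posSemidef_sqrt.isHermitian.sub hB.posSemidef_sqrt.isHermitian
  have hC : (A - B).IsHermitian := hA.isHermitian.sub hB.isHermitian
  have hXid : hX.cfc id = X := cfc_id hX
  have hkey : X * Y + Y * X = (A - B) + (A - B) := by
    simp only [hXdef, hYdef, mul_add, add_mul, sub_mul, mul_sub, hA.sqrt_mul_self,
      hB.sqrt_mul_self]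
    abel
  set S := hX.cfc sgn with hSdef
  set Xabs := hX.cfc (fun x => |x|) with hXabsdef
  set Xp := hX.cfc (fun x => max x 0) with hXpdef
  set Xm := hX.cfc (fun x => max (-x) 0) with hXmdef
  have hSX : S * X = Xabs := by
    conv_lhs => rw [← hXid]
    rw [cfc_mul]
    exact cfc_congr hX fun x => sgn_mul x
  have hXS : X * S = Xabs := by
    conv_lhs => rw [← hXid]
    rw [cfc_mul]
    exact cfc_congr hX fun x => by rw [id_eq, mul_comm]; exact sgn_mul x
  -- trace (S * (A - B)) = trace (Xabs * Y)
  have hSC : (S * (A - B)).trace = (Xabs * Y).trace := by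
    have h2 : (S * (A - B)).trace + (S * (A - B)).trace
        = (Xabs * Y).trace + (Xabs * Y).trace := by
      rw [← trace_add, ← mul_add, ← hkey, mul_add, trace_add, ← mul_assoc, hSX,
        trace_mul_comm S (Y * X), mul_assoc, trace_mul_comm Y (X * S), hXS]
    linarith
  -- trace (X * X) ≤ trace (Xabs * Y)
  have hXXtr : (X * X).trace = ∑ i, hX.eigenvalues i * hX.eigenvalues i := by
    conv_lhs => rw [← hXid, cfc_mul, cfc_trace]
    simp only [id_eq]
  have hXpX : (Xp * X).trace = ∑ i, max (hX.eigenvalues i) 0 * hX.eigenvalues i := by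
    conv_lhs => rw [← hXid, cfc_mul, cfc_trace]
    simp only [id_eq]
  have hXmX : (Xm * X).trace = ∑ i, max (-hX.eigenvalues i) 0 * hX.eigenvalues i := by
    conv_lhs => rw [← hXid, cfc_mul, cfc_trace]
    simp only [id_eq]
  have hsplit : (Xabs * Y).trace = (Xp * Y).trace + (Xm * Y).trace := by
    rw [← trace_add, ← add_mul, hXpdef, hXmdef, cfc_add,
      cfc_congr hX fun x => pos_add_neg x]
  have hYmX : Y - X = hB.sqrt + hB.sqrt := by rw [hXdef, hYdef]; abel
  have hYpX : Y + X = hA.sqrt + hA.sqrt := by rw [hXdef, hYdef]; abel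
  have h3 : 0 ≤ (Xp * (Y - X)).trace :=
    trace_mul_psd_nonneg (cfc_psd hX _ fun x => le_max_right x 0)
      (hYmX ▸ hB.posSemidef_sqrt.add hB.posSemidef_sqrt)
  have h4 : 0 ≤ (Xm * (Y + X)).trace :=
    trace_mul_psd_nonneg (cfc_psd hX _ fun x => le_max_right (-x) 0)
      (hYpX ▸ hA.posSemidef_sqrt.add hA.posSemidef_sqrt)
  rw [mul_sub, trace_sub] at h3
  rw [mul_add, trace_add] at h4
  have hsum : (Xp * X).trace - (Xm * X).trace = (X * X).trace := by
    rw [hXpX, hXmX, hXXtr, ← Finset.sum_sub_distrib]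
    exact Finset.sum_congr rfl fun i _ => by rw [← sub_mul, pos_sub_neg]
  -- so trace (X*X) ≤ trace (S * (A - B))
  have step1 : (X * X).trace ≤ (S * (A - B)).trace := by
    rw [hSC, hsplit]
    linarith
  -- now trace (S * (A-B)) ≤ trace (cfc |·| (A-B))
  set Cp := hC.cfc (fun x => max x 0) with hCpdef
  set Cm := hC.cfc (fun x => max (-x) 0) with hCmdef
  have hCsplit : A - B = Cp - Cm := by
    rw [hCpdef, hCmdef, cfc_sub]
    conv_lhs => rw [← cfc_id hC]
    exact cfc_congr hC fun x => (pos_sub_neg x).symm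
  have hCpPsd : Cp.PosSemidef := cfc_psd hC _ fun x => le_max_right x 0
  have hCmPsd : Cm.PosSemidef := cfc_psd hC _ fun x => le_max_right (-x) 0
  have h5 : 0 ≤ ((1 - S) * Cp).trace := by
    have h1S : (1 : Matrix n n ℝ) - S = hX.cfc (fun x => 1 - sgn x) := by
      rw [← cfc_one hX, hSdef, cfc_sub]
    exact trace_mul_psd_nonneg (h1S ▸ cfc_psd hX _ one_sub_sgn) hCpPsd
  have h6 : 0 ≤ ((1 + S) * Cm).trace := by
    have h1S : (1 : Matrix n n ℝ) + S = hX.cfc (fun x => 1 + sgn x) := by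
      rw [← cfc_one hX, hSdef, cfc_add]
    exact trace_mul_psd_nonneg (h1S ▸ cfc_psd hX _ one_add_sgn) hCmPsd
  rw [sub_mul, trace_sub, one_mul] at h5
  rw [add_mul, trace_add, one_mul] at h6
  have hCtr : Cp.trace + Cm.trace = (hC.cfc (fun x => |x|)).trace := by
    rw [hCpdef, hCmdef, cfc_trace, cfc_trace, cfc_trace, ← Finset.sum_add_distrib]
    exact Finset.sum_congr rfl fun i _ => pos_add_neg _
  have hSCC : (S * (A - B)).trace = (S * Cp).trace - (S * Cm).trace := by
    conv_lhs => rw [hCsplit]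
    rw [mul_sub, trace_sub]
  have step2 : (S * (A - B)).trace ≤ (hC.cfc (fun x => |x|)).trace := by
    rw [hSCC]
    linarith
  linarith

end PS

theorem nuclearNorm_sub_ge_frobNorm_sqrt_sub_sq (M : ℕ) (A B : Matrix (Fin M) (Fin M) ℝ)
    (hA : A.PosSemidef) (hB : B.PosSemidef) :
    nuclearNorm (A - B) ≥ (frobNorm (hA.sqrt - hB.sqrt)) ^ 2 := by
  have hC : (A - B).IsHermitian := hA.isHermitian.sub hB.isHermitian
  set X := hA.sqrt - hB.sqrt with hXdef
  have hX : X.IsHermitian :=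
    hA.posSemidef_sqrt.isHermitian.sub hB.posSemidef_sqrt.isHermitian
  have hXt : Xᵀ = X := by rw [← real_conjTranspose_eq]; exact hX.eq
  have hnn : 0 ≤ (Xᵀ * X).trace := PS.psd_trace_nonneg (psd_tmul X)
  have hfrob : frobNorm X ^ 2 = (X * X).trace := by
    rw [frobNorm, Real.sq_sqrt hnn, hXt]
  have habs : (hC.cfc (fun x => |x|)).PosSemidef := PS.cfc_psd hC _ fun x => abs_nonneg x
  have hsq : (hC.cfc (fun x => |x|)) ^ 2 = (A - B)ᵀ * (A - B) := by
    rw [pow_two, PS.cfc_mul, PS.cfc_congr hC (fun x => abs_mul_abs_self x)]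
    have h2 : hC.cfc id * hC.cfc id = hC.cfc (fun x => x * x) := by
      rw [PS.cfc_mul]
      exact PS.cfc_congr hC fun x => by simp
    have h3 : (A - B)ᵀ = A - B := by rw [← real_conjTranspose_eq]; exact hC.eq
    rw [← h2, PS.cfc_id, h3]
  have hsqrt : Matrix.PosSemidef.sqrt (psd_tmul (A - B)) = hC.cfc (fun x => |x|) :=
    (habs.eq_sqrt_of_sq_eq (psd_tmul (A - B)) hsq).symm
  rw [ge_iff_le, hfrob, nuclearNorm, hsqrt]
  exact PS.main hA hB
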